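/- For every natural number n ≥ 1, the maximum over 0 ≤ m ≤ n of (n-m)^m is at most (n / ln(n/ln n))^n for all sufficiently large n. -/
import Mathlib

private lemma key_11 (n m : ℕ) (hn : 100 ≤ n) (hm : m ≤ n) :
    (((n - m) ^ m : ℕ) : ℝ) ≤ ((n : ℝ) / Real.log ((n : ℝ) / Real.log n)) ^ n := by
  have hn1 : (1:ℕ) ≤ n := le_trans (by norm_num) hn
  set n' : ℝ := (n : ℝ) with hn'
  have hn100 : (100:ℝ) ≤ n' := by rw [hn']; exact_mod_cast hn
  have hnpos : (0:ℝ) < n' := by linarith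
  set s : ℝ := Real.sqrt n' with hs
  have hs10 : (10:ℝ) ≤ s := by
    rw [hs, show (10:ℝ) = Real.sqrt 100 by
      rw [show (100:ℝ) = 10^2 by norm_num, Real.sqrt_sq]; norm_num]
    exact Real.sqrt_le_sqrt hn100
  have hspos : (0:ℝ) < s := by linarith
  have hssq : s * s = n' := Real.mul_self_sqrt hnpos.le
  set logn : ℝ := Real.log n' with hlogn
  have hexp1 : Real.exp 1 ≤ 5 := by
    have := Real.exp_one_lt_d9; linarith
  have hlogn1 : (1:ℝ) ≤ logn := by
    rw [hlogn, Real.le_log_iff_exp_le hnpos]; linarith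
  have hlognpos : (0:ℝ) < logn := by linarith
  have hlogn_le : logn ≤ 2 * s := by
    have h1 : logn = 2 * Real.log s := by
      rw [hlogn, ← hssq, Real.log_mul hspos.ne' hspos.ne']; ring
    have h2 : Real.log s ≤ s - 1 := Real.log_le_sub_one_of_pos hspos
    linarith
  have hdiv_ge : s / 2 ≤ n' / logn := by
    rw [div_le_div_iff₀ (by norm_num) hlognpos, ← hssq]
    nlinarith
  have hdivpos : (0:ℝ) < n' / logn := lt_of_lt_of_le (by linarith) hdiv_ge
  set L : ℝ := Real.log (n' / logn) with hL
  have hL1 : (1:ℝ) ≤ L := by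
    rw [hL, Real.le_log_iff_exp_le hdivpos]; linarith
  have hLpos : (0:ℝ) < L := by linarith
  have hL_le_logn : L ≤ logn := by
    rw [hL, hlogn]
    exact Real.log_le_log hdivpos (div_le_self hnpos.le hlogn1)
  set R : ℝ := n' / L with hR
  have hR1 : (1:ℝ) ≤ R := by
    rw [hR, le_div_iff₀ hLpos]
    nlinarith [Real.log_le_sub_one_of_pos hnpos]
  have hRpos : (0:ℝ) < R := by linarith
  rcases eq_or_lt_of_le hm with hmeq | hmlt
  · -- m = n : LHS = 0
    rw [hmeq, Nat.sub_self, Nat.cast_pow]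
    rw [Nat.cast_zero, zero_pow (by omega)]
    exact pow_nonneg hRpos.le n
  · -- m < n
    have hk1 : (1:ℕ) ≤ n - m := by omega
    set kr : ℝ := n' - (m:ℝ) with hkr
    have hcast : (((n - m) ^ m : ℕ) : ℝ) = kr ^ m := by
      rw [Nat.cast_pow, Nat.cast_sub hm]
    have hkr1 : (1:ℝ) ≤ kr := by
      rw [hkr]; have : (m:ℝ) + 1 ≤ n' := by rw [hn']; exact_mod_cast hmlt
      linarith
    have hkrpos : (0:ℝ) < kr := by linarith
    rw [hcast]
    have hlogkr0 : (0:ℝ) ≤ Real.log kr := Real.log_nonneg hkr1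
    have hlogR0 : (0:ℝ) ≤ Real.log R := Real.log_nonneg hR1
    have hkey : (m:ℝ) * Real.log kr ≤ (n:ℝ) * Real.log R := by
      have hlogR : Real.log R = Real.log n' - Real.log L := by
        rw [hR, Real.log_div hnpos.ne' hLpos.ne']
      have hLdef : L = Real.log n' - Real.log logn := by
        rw [hL, Real.log_div hnpos.ne' hlognpos.ne']
      have hlogL_le : Real.log L ≤ Real.log logn :=
        Real.log_le_log hLpos hL_le_logn
      have hL_le_logR : L ≤ Real.log R := by rw [hlogR]; linarith
      rcases le_or_gt kr R with hcase | hcase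
      · have h1 : Real.log kr ≤ Real.log R := Real.log_le_log hkrpos hcase
        have h2 : (m:ℝ) ≤ (n:ℝ) := by exact_mod_cast hm
        exact mul_le_mul h2 h1 hlogkr0 (by positivity)
      · have hL_le_logkr : L ≤ Real.log kr :=
          le_trans hL_le_logR (Real.log_le_log hRpos hcase.le)
        have hm_eq : (m:ℝ) = n' - kr := by rw [hkr]; ring
        have hprodpos : (0:ℝ) < kr * L / n' := by positivity
        have hlogprod : Real.log (kr * L / n') =
            Real.log kr + Real.log L - Real.log n' := by
          rw [Real.log_div (by positivity) hnpos.ne',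
            Real.log_mul hkrpos.ne' hLpos.ne']
        have h3 : Real.log (kr * L / n') ≤ kr * L / n' - 1 :=
          Real.log_le_sub_one_of_pos hprodpos
        have h4 : n' * (kr * L / n') = kr * L := by
          field_simp
        have h5 : kr * L ≤ kr * Real.log kr :=
          mul_le_mul_of_nonneg_left hL_le_logkr hkrpos.le
        -- want: (n' - kr) * log kr ≤ n' * log R = n' * (log n' - log L)
        have h6 : n' * Real.log (kr * L / n') ≤ kr * Real.log kr := by
          calc n' * Real.log (kr * L / n') ≤ n' * (kr * L / n') :=
                mul_le_mul_of_nonneg_left (by linarith) hnpos.le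
            _ = kr * L := h4
            _ ≤ kr * Real.log kr := h5
        rw [hlogprod] at h6
        rw [hm_eq, hlogR]
        nlinarith [h6]
    calc kr ^ m = Real.exp ((m:ℝ) * Real.log kr) := by
          rw [Real.exp_nat_mul, Real.exp_log hkrpos]
      _ ≤ Real.exp ((n:ℝ) * Real.log R) := Real.exp_le_exp.mpr hkey
      _ = R ^ n := by rw [Real.exp_nat_mul, Real.exp_log hRpos]

theorem stmt_11 :
    ∃ N : ℕ, ∀ n : ℕ, N ≤ n → 1 ≤ n →
      (((Finset.range (n + 1)).sup (fun m => (n - m) ^ m) : ℕ) : ℝ) ≤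
        ((n : ℝ) / Real.log ((n : ℝ) / Real.log n)) ^ n := by
  refine ⟨100, fun n hn _ => ?_⟩
  obtain ⟨m₀, hm₀, heq⟩ := Finset.exists_mem_eq_sup (Finset.range (n + 1))
    (by simp) (fun m => (n - m) ^ m)
  rw [heq]
  exact key_11 n m₀ hn (by simpa [Nat.lt_succ_iff] using hm₀)
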